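/- The self-adjointness structure of $J_{1/2}$: for the parity operator $\mathcal{P}$ and $Q_{1/2} = \begin{pmatrix}\Delta & 2g(g-a)\\ 2g(g+a^\dagger) & \Delta\end{pmatrix}$ with real $g, \Delta$, the operator $J_{1/2} = (\mathcal{P}\otimes I)Q_{1/2}$ is symmetric with respect to the standard Hermitian inner product induced by $\langle x^n, x^m\rangle = n!\,\delta_{nm}$ on $\mathbb{C}[x]$ (extended to $\mathbb{C}[x]^2$ componentwise): $\langle J_{1/2} u, v\rangle = \langle u, J_{1/2} v\rangle$ for all $u, v \in \mathbb{C}[x]^2$. -/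
import Mathlib


open Polynomial

noncomputable section

/-- The space of operators on `ℂ[x]`. -/
abbrev E := Module.End ℂ (Polynomial ℂ)

/-- Annihilation operator `a = d/dx`. -/
def opA : E := Polynomial.derivative

/-- Creation operator `a† = ` multiplication by `x`. -/
def opC : E := LinearMap.mulLeft ℂ (X : Polynomial ℂ)

/-- Parity operator `(𝒫 f)(x) = f(-x)`. -/
def opP : E := (aeval (-X : Polynomial ℂ)).toLinearMap

/-- `2×2` matrices of operators, i.e. operators on `ℂ[x] ⊗ ℂ²`. -/
abbrev M2 := Matrix (Fin 2) (Fin 2) E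

/-- The asymmetric quantum Rabi Hamiltonian
`H^ε = a†a + Δ σx + g (a+a†) σz + ε σz`. -/
def Hop (g Δ ε : ℝ) : M2 :=
  !![opC * opA + (g : ℂ) • (opA + opC) + (ε : ℂ) • 1, (Δ : ℂ) • 1;
     (Δ : ℂ) • 1, opC * opA - (g : ℂ) • (opA + opC) - (ε : ℂ) • 1]

/-- The parity operator `𝒫 ⊗ I` on `ℂ[x] ⊗ ℂ²`. -/
def Pm : M2 := !![opP, 0; 0, opP]

end

noncomputable section

/-- The Bargmann–Fock inner product on `ℂ[x]`, determined by
`⟪xⁿ, xᵐ⟫ = n! δₙₘ` (antilinear in the first argument). -/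
def ip (f h : Polynomial ℂ) : ℂ :=
  ∑ n ∈ Finset.range (f.natDegree + h.natDegree + 1),
    (n.factorial : ℂ) * (starRingEnd ℂ) (f.coeff n) * h.coeff n

/-- The induced inner product on `ℂ[x]²`. -/
def ip2 (u v : Fin 2 → Polynomial ℂ) : ℂ := ∑ i, ip (u i) (v i)

/-- A `2×2` operator matrix acting on `ℂ[x]²`. -/
def act (Q : M2) (v : Fin 2 → Polynomial ℂ) : Fin 2 → Polynomial ℂ :=
  fun i => ∑ j, Q i j (v j)

/-- The matrix `Q_{1/2}` for `ε = 1/2`. -/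
def Q12 (g Δ : ℝ) : M2 :=
  !![(Δ : ℂ) • 1, (2 * g * g : ℂ) • 1 - (2 * g : ℂ) • opA;
     (2 * g * g : ℂ) • 1 + (2 * g : ℂ) • opC, (Δ : ℂ) • 1]

end

/-! ### Auxiliary lemmas -/

lemma ip_sum (f h : Polynomial ℂ) {N : ℕ} (hN : f.natDegree < N) :
    ip f h = ∑ n ∈ Finset.range N,
      (n.factorial : ℂ) * (starRingEnd ℂ) (f.coeff n) * h.coeff n := by
  unfold ip
  rcases le_total (f.natDegree + h.natDegree + 1) N with hle | hle
  · refine Finset.sum_subset (Finset.range_subset_range.2 hle) (fun n hn hn' => ?_)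
    rw [f.coeff_eq_zero_of_natDegree_lt (by simp at hn'; omega), map_zero, mul_zero, zero_mul]
  · refine (Finset.sum_subset (Finset.range_subset_range.2 hle) (fun n hn hn' => ?_)).symm
    rw [f.coeff_eq_zero_of_natDegree_lt (by simp at hn'; omega), map_zero, mul_zero, zero_mul]

lemma ip_add_left (f g h : Polynomial ℂ) : ip (f + g) h = ip f h + ip g h := by
  set N := max (f + g).natDegree (max f.natDegree g.natDegree) + 1 with hNdef
  rw [ip_sum (f + g) h (N := N) (by omega), ip_sum f h (N := N) (by omega),
      ip_sum g h (N := N) (by omega), ← Finset.sum_add_distrib]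
  exact Finset.sum_congr rfl fun n _ => by rw [coeff_add, map_add]; ring

lemma ip_sub_left (f g h : Polynomial ℂ) : ip (f - g) h = ip f h - ip g h := by
  set N := max (f - g).natDegree (max f.natDegree g.natDegree) + 1 with hNdef
  rw [ip_sum (f - g) h (N := N) (by omega), ip_sum f h (N := N) (by omega),
      ip_sum g h (N := N) (by omega), ← Finset.sum_sub_distrib]
  exact Finset.sum_congr rfl fun n _ => by rw [coeff_sub, map_sub]; ring

lemma ip_smul_left (c : ℂ) (f h : Polynomial ℂ) :
    ip (c • f) h = (starRingEnd ℂ) c * ip f h := by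
  set N := max (c • f).natDegree f.natDegree + 1 with hNdef
  rw [ip_sum (c • f) h (N := N) (by omega), ip_sum f h (N := N) (by omega), Finset.mul_sum]
  exact Finset.sum_congr rfl fun n _ => by rw [coeff_smul, smul_eq_mul, map_mul]; ring

lemma ip_add_right (f g h : Polynomial ℂ) : ip f (g + h) = ip f g + ip f h := by
  rw [ip_sum f (g + h) (N := f.natDegree + 1) (by omega),
      ip_sum f g (N := f.natDegree + 1) (by omega),
      ip_sum f h (N := f.natDegree + 1) (by omega), ← Finset.sum_add_distrib]
  exact Finset.sum_congr rfl fun n _ => by rw [coeff_add]; ring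

lemma ip_sub_right (f g h : Polynomial ℂ) : ip f (g - h) = ip f g - ip f h := by
  rw [ip_sum f (g - h) (N := f.natDegree + 1) (by omega),
      ip_sum f g (N := f.natDegree + 1) (by omega),
      ip_sum f h (N := f.natDegree + 1) (by omega), ← Finset.sum_sub_distrib]
  exact Finset.sum_congr rfl fun n _ => by rw [coeff_sub]; ring

lemma ip_smul_right (c : ℂ) (f h : Polynomial ℂ) : ip f (c • h) = c * ip f h := by
  rw [ip_sum f (c • h) (N := f.natDegree + 1) (by omega),
      ip_sum f h (N := f.natDegree + 1) (by omega), Finset.mul_sum]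
  exact Finset.sum_congr rfl fun n _ => by rw [coeff_smul, smul_eq_mul]; ring

lemma ip_neg_right (f h : Polynomial ℂ) : ip f (-h) = -ip f h := by
  have := ip_smul_right (-1) f h; simpa using this

lemma ip_conj (f h : Polynomial ℂ) : (starRingEnd ℂ) (ip f h) = ip h f := by
  set N := max f.natDegree h.natDegree + 1 with hNdef
  rw [ip_sum f h (N := N) (by omega), ip_sum h f (N := N) (by omega), map_sum]
  exact Finset.sum_congr rfl fun n _ => by
    rw [map_mul, map_mul, Complex.conj_conj, map_natCast]; ring

lemma ip_derivative (f h : Polynomial ℂ) : ip (derivative f) h = ip f (X * h) := by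
  rw [ip_sum (derivative f) h (N := f.natDegree + 1)
        (lt_of_le_of_lt f.natDegree_derivative_le (by omega)),
      ip_sum f (X * h) (N := f.natDegree + 2) (by omega),
      Finset.sum_range_succ' _ (f.natDegree + 1)]
  have h0 : (X * h).coeff 0 = 0 := by simp [coeff_X_mul_zero]
  rw [h0, mul_zero, add_zero]
  exact Finset.sum_congr rfl fun n _ => by
    rw [coeff_derivative, coeff_X_mul, map_mul, Nat.factorial_succ]
    push_cast
    rw [map_add, map_natCast, map_one]
    ring

lemma ip_X_mul (f h : Polynomial ℂ) : ip (X * f) h = ip f (derivative h) :=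
  calc ip (X * f) h = (starRingEnd ℂ) (ip h (X * f)) := (ip_conj h (X * f)).symm
    _ = (starRingEnd ℂ) (ip (derivative h) f) := by rw [ip_derivative]
    _ = ip f (derivative h) := ip_conj _ _

lemma opP_coeff (f : Polynomial ℂ) (n : ℕ) : (opP f).coeff n = (-1) ^ n * f.coeff n := by
  induction f using Polynomial.induction_on' with
  | add p q hp hq => simp only [opP] at *; rw [map_add, coeff_add, hp, hq, coeff_add]; ring
  | monomial k c =>
    simp only [opP, AlgHom.toLinearMap_apply, aeval_monomial, coeff_monomial]
    rw [neg_pow, ← C_eq_algebraMap, ← C_1, ← C_neg, ← C_pow, ← mul_assoc, ← C_mul,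
      coeff_C_mul, coeff_X_pow]
    rcases eq_or_ne k n with rfl | hkn
    · simp [mul_comm]
    · simp [hkn, Ne.symm hkn]

lemma natDegree_opP_le (f : Polynomial ℂ) : (opP f).natDegree ≤ f.natDegree := by
  refine Polynomial.natDegree_le_iff_coeff_eq_zero.2 fun m hm => ?_
  rw [opP_coeff, f.coeff_eq_zero_of_natDegree_lt hm, mul_zero]

lemma opP_X_mul (h : Polynomial ℂ) : opP (X * h) = -(X * opP h) := by
  show (aeval (-X : Polynomial ℂ)) (X * h) = _
  rw [map_mul, aeval_X]
  show -X * opP h = _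
  ring

lemma opP_derivative (h : Polynomial ℂ) : derivative (opP h) = -opP (derivative h) := by
  ext n
  rw [coeff_derivative, opP_coeff, coeff_neg, opP_coeff, coeff_derivative, pow_succ]
  ring

lemma opA_apply (f : Polynomial ℂ) : opA f = derivative f := rfl

lemma opC_apply (f : Polynomial ℂ) : opC f = X * f := rfl

lemma X_mul_opP (h : Polynomial ℂ) : X * opP h = -opP (X * h) := by
  rw [opP_X_mul]; ring

lemma ip_P (f h : Polynomial ℂ) : ip (opP f) h = ip f (opP h) := by
  rw [ip_sum (opP f) h (N := f.natDegree + 1)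
        (lt_of_le_of_lt (natDegree_opP_le f) (Nat.lt_succ_self _)),
      ip_sum f (opP h) (N := f.natDegree + 1) (Nat.lt_succ_self _)]
  refine Finset.sum_congr rfl fun n _ => ?_
  rw [opP_coeff, opP_coeff, map_mul, map_pow, map_neg, map_one]
  ring

/-- the operator `J_{1/2} = (𝒫 ⊗ I) Q_{1/2}` with real `g, Δ` is
symmetric with respect to the Bargmann–Fock inner product on `ℂ[x]²`. -/
theorem J12_symmetric (g Δ : ℝ) (u v : Fin 2 → Polynomial ℂ) :
    ip2 (act (Pm * Q12 g Δ) u) v = ip2 u (act (Pm * Q12 g Δ) v) := by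
  simp only [ip2, act, Pm, Q12, Matrix.mul_fin_two, Fin.sum_univ_two, Matrix.of_apply,
    Matrix.cons_val', Matrix.cons_val_zero, Matrix.cons_val_one, Matrix.head_cons,
    Matrix.empty_val', Matrix.cons_val_fin_one, Matrix.head_fin_const,
    zero_mul, mul_zero, add_zero, zero_add,
    Module.End.mul_apply, LinearMap.add_apply, LinearMap.sub_apply, LinearMap.smul_apply,
    Module.End.one_apply]
  simp only [opA_apply, opC_apply, map_add, map_sub, map_smul,
    ip_add_left, ip_sub_left, ip_smul_left, ip_add_right, ip_sub_right, ip_smul_right,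
    ip_P, ip_derivative, ip_X_mul, X_mul_opP, opP_derivative, ip_neg_right,
    smul_neg, Complex.conj_ofReal, map_mul, map_ofNat]
  ring
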